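/- Let n ≥ 2 and let λ_0, …, λ_n be pairwise distinct complex numbers. Let sq : ℙ(ℂ^{n+1}) → ℙ(ℂ^{n+1}) be the (well-defined) map sending [x_0 : ⋯ : x_n] to [x_0² : ⋯ : x_n²]. Then the image of the Humbert–Edge curve C of type n under sq is exactly the set L = {[y_0 : ⋯ : y_n] ∈ ℙ(ℂ^{n+1}) : ∑_{i=0}^n λ_i^k y_i = 0 for every k = 0, …, n−2}; moreover L is the projectivization of a 2-dimensional linear subspace of ℂ^{n+1} (namely the kernel of the (n−1) × (n+1) Vandermonde matrix (λ_i^k), which has rank n−1), hence L is a projective line. -/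

import Mathlib

open Matrix

/-- The Humbert–Edge curve of type `n` attached to the pairwise distinct complex numbers
`λ_0, …, λ_n`. -/
def humbertEdge (n : ℕ) (lam : Fin (n + 1) → ℂ) :
    Set (Projectivization ℂ (Fin (n + 1) → ℂ)) :=
  {P | ∀ k < n - 1, ∑ i, lam i ^ k * P.rep i ^ 2 = 0}

/-- The squaring map `sq : ℙ(ℂ^{n+1}) → ℙ(ℂ^{n+1})`, `[x_0 : ⋯ : x_n] ↦ [x_0² : ⋯ : x_n²]`. -/
noncomputable def sqMap (n : ℕ) (P : Projectivization ℂ (Fin (n + 1) → ℂ)) :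
    Projectivization ℂ (Fin (n + 1) → ℂ) :=
  Projectivization.mk ℂ (fun i => P.rep i ^ 2) (by
    intro h
    apply P.rep_nonzero
    funext i
    have h2 := congrFun h i
    simp only [Pi.zero_apply, pow_eq_zero_iff, ne_eq, OfNat.ofNat_ne_zero,
      not_false_iff] at h2
    simpa using h2)

lemma sqMap_mk (n : ℕ) (x : Fin (n + 1) → ℂ) (hx : x ≠ 0)
    (hx2 : (fun i => x i ^ 2) ≠ 0) :
    sqMap n (Projectivization.mk ℂ x hx) = Projectivization.mk ℂ (fun i => x i ^ 2) hx2 := by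
  obtain ⟨a, ha⟩ := Projectivization.exists_smul_eq_mk_rep ℂ x hx
  unfold sqMap
  rw [Projectivization.mk_eq_mk_iff]
  refine ⟨a ^ 2, ?_⟩
  funext i
  have : (Projectivization.mk ℂ x hx).rep i = (a : ℂ) * x i := by
    rw [← ha]; rfl
  simp [this, mul_pow, Units.smul_def, Pi.smul_apply, smul_eq_mul]

lemma rank_vdm (n : ℕ) (hn : 2 ≤ n) (lam : Fin (n + 1) → ℂ)
    (hlam : Function.Injective lam) :
    (Matrix.of fun (k : Fin (n - 1)) (i : Fin (n + 1)) => lam i ^ (k : ℕ)).rank = n - 1 := by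
  have hdet : (Matrix.vandermonde lam).det ≠ 0 := by
    rw [Matrix.det_vandermonde_ne_zero_iff]
    exact hlam
  have hunit : IsUnit (Matrix.vandermonde lam)ᵀ := by
    rw [Matrix.isUnit_iff_isUnit_det, Matrix.det_transpose]
    exact hdet.isUnit
  have hrows : LinearIndependent ℂ (Matrix.vandermonde lam)ᵀ :=
    Matrix.linearIndependent_rows_iff_isUnit.2 hunit
  have hle : n - 1 ≤ n + 1 := by omega
  have hsub : LinearIndependent ℂ
      (Matrix.of fun (k : Fin (n - 1)) (i : Fin (n + 1)) => lam i ^ (k : ℕ)) := by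
    have := hrows.comp (Fin.castLE hle) (Fin.castLE_injective hle)
    convert this using 1
    have heq : (Matrix.of fun (k : Fin (n - 1)) (i : Fin (n + 1)) => lam i ^ (k : ℕ))
        = (Matrix.vandermonde lam)ᵀ ∘ Fin.castLE hle := by
      ext k i; simp [Matrix.vandermonde_apply, Matrix.transpose_apply, Function.comp_apply]
      rfl
    rw [heq]
  have := hsub.rank_matrix
  simpa using this

theorem stmt_6 (n : ℕ) (hn : 2 ≤ n) (lam : Fin (n + 1) → ℂ)
    (hlam : Function.Injective lam) :
    (∀ (x : Fin (n + 1) → ℂ) (hx : x ≠ 0) (hx2 : (fun i => x i ^ 2) ≠ 0),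
      sqMap n (Projectivization.mk ℂ x hx)
        = Projectivization.mk ℂ (fun i => x i ^ 2) hx2) ∧
    sqMap n '' humbertEdge n lam
      = {Q : Projectivization ℂ (Fin (n + 1) → ℂ) |
          ∀ k < n - 1, ∑ i, lam i ^ k * Q.rep i = 0} ∧
    (Matrix.of fun (k : Fin (n - 1)) (i : Fin (n + 1)) => lam i ^ (k : ℕ)).rank = n - 1 ∧
    Module.finrank ℂ
        (LinearMap.ker
          (Matrix.mulVecLin
            (Matrix.of fun (k : Fin (n - 1)) (i : Fin (n + 1)) => lam i ^ (k : ℕ)))) = 2 ∧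
    (∀ Q : Projectivization ℂ (Fin (n + 1) → ℂ),
      (∀ k < n - 1, ∑ i, lam i ^ k * Q.rep i = 0) ↔
        Q.rep ∈ LinearMap.ker
          (Matrix.mulVecLin
            (Matrix.of fun (k : Fin (n - 1)) (i : Fin (n + 1)) => lam i ^ (k : ℕ)))) := by
  set M : Matrix (Fin (n - 1)) (Fin (n + 1)) ℂ :=
    Matrix.of fun (k : Fin (n - 1)) (i : Fin (n + 1)) => lam i ^ (k : ℕ) with hM
  have hrank : M.rank = n - 1 := rank_vdm n hn lam hlam
  refine ⟨sqMap_mk n, ?_, hrank, ?_, ?_⟩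
  · -- image equality
    ext Q
    simp only [Set.mem_image, Set.mem_setOf_eq]
    constructor
    · rintro ⟨P, hP, rfl⟩ k hk
      obtain ⟨a, ha⟩ : ∃ a : ℂˣ, a • (fun i => P.rep i ^ 2) = (sqMap n P).rep :=
        Projectivization.exists_smul_eq_mk_rep ℂ _ _
      have hrep : ∀ i, (sqMap n P).rep i = (a : ℂ) * P.rep i ^ 2 := fun i => by
        rw [← ha]; rfl
      calc ∑ i, lam i ^ k * (sqMap n P).rep i
          = (a : ℂ) * ∑ i, lam i ^ k * P.rep i ^ 2 := by
            rw [Finset.mul_sum]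
            exact Finset.sum_congr rfl fun i _ => by rw [hrep i]; ring
        _ = 0 := by rw [hP k hk, mul_zero]
    · intro hQ
      choose x hxsq using fun i => IsAlgClosed.exists_pow_nat_eq (Q.rep i) (n := 2) two_pos
      have hfun : (fun i => x i ^ 2) = Q.rep := funext hxsq
      have hx : x ≠ 0 := by
        intro h
        apply Q.rep_nonzero
        rw [← hfun, h]
        funext i; simp
      have hx2 : (fun i => x i ^ 2) ≠ 0 := hfun ▸ Q.rep_nonzero
      refine ⟨Projectivization.mk ℂ x hx, ?_, ?_⟩
      · intro k hk
        obtain ⟨c, hc⟩ := Projectivization.exists_smul_eq_mk_rep ℂ x hx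
        have hrep : ∀ i, (Projectivization.mk ℂ x hx).rep i = (c : ℂ) * x i := fun i => by
          rw [← hc]; rfl
        calc ∑ i, lam i ^ k * (Projectivization.mk ℂ x hx).rep i ^ 2
            = (c : ℂ) ^ 2 * ∑ i, lam i ^ k * Q.rep i := by
              rw [Finset.mul_sum]
              exact Finset.sum_congr rfl fun i _ => by
                rw [hrep i, ← hxsq i]; ring
          _ = 0 := by rw [hQ k hk, mul_zero]
      · rw [sqMap_mk n x hx hx2]
        have : Projectivization.mk ℂ (fun i => x i ^ 2) hx2
            = Projectivization.mk ℂ Q.rep Q.rep_nonzero := by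
          rw [Projectivization.mk_eq_mk_iff]
          exact ⟨1, by simp [hfun]⟩
        rw [this, Projectivization.mk_rep]
  · -- finrank of kernel
    have hrn := LinearMap.finrank_range_add_finrank_ker M.mulVecLin
    have hdom : Module.finrank ℂ (Fin (n + 1) → ℂ) = n + 1 := by
      simp [Module.finrank_pi]
    rw [hdom] at hrn
    have hr : Module.finrank ℂ (LinearMap.range M.mulVecLin) = n - 1 := hrank
    omega
  · -- the iff
    intro Q
    constructor
    · intro h
      rw [LinearMap.mem_ker]
      funext k
      have hk : (k : ℕ) < n - 1 := k.isLt
      have := h (k : ℕ) hk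
      simpa [Matrix.mulVecLin_apply, Matrix.mulVec, dotProduct, hM] using this
    · intro h k hk
      rw [LinearMap.mem_ker] at h
      have := congrFun h ⟨k, hk⟩
      simpa [Matrix.mulVecLin_apply, Matrix.mulVec, dotProduct, hM] using this
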